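/- Let E be a directed graph, let v be a vertex lying on a terminal path α, and let C be the cluster of v. Then any p ∈ E^{≤∞} with v ∈ p⁰ satisfies p ∼ α; C = T(C) and C is the union of the sets T(β⁰) taken over all terminal paths β with β ∼ α; and the saturated closure of C equals the saturated closure of α⁰, which equals the saturated closure of {u} for any u ∈ C. -/

import Mathlib

/-- A directed graph: vertices, edges, source and range maps. -/
structure DGraph where
  V : Type
  Ed : Type
  s : Ed → V
  r : Ed → V

namespace DGraph

variable (E : DGraph)

/-- One-step adjacency: there is an edge from `u` to `v`. -/
def Adj (u v : E.V) : Prop := ∃ e, E.s e = u ∧ E.r e = v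

/-- `u ≥ v`: there is a (finite) path from `u` to `v`. -/
def Reaches (u v : E.V) : Prop := Relation.ReflTransGen E.Adj u v

/-- The tree `T(W)` of a set of vertices. -/
def tree (W : Set E.V) : Set E.V := {u | ∃ v ∈ W, E.Reaches v u}

/-- The root `R(W)` of a set of vertices. -/
def root (W : Set E.V) : Set E.V := {u | ∃ v ∈ W, E.Reaches u v}

/-- The set of edges emitted by `v`. -/
def emits (v : E.V) : Set E.Ed := {e | E.s e = v}

/-- A sink emits no edges. -/
def IsSink (v : E.V) : Prop := E.emits v = ∅

/-- An infinite emitter emits infinitely many edges. -/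
def IsInfEmitter (v : E.V) : Prop := (E.emits v).Infinite

/-- A regular vertex is neither a sink nor an infinite emitter. -/
def IsRegular (v : E.V) : Prop := (E.emits v).Nonempty ∧ (E.emits v).Finite

/-- A hereditary set of vertices: `T(H) ⊆ H`. -/
def Hereditary (H : Set E.V) : Prop := ∀ u ∈ H, ∀ v, E.Reaches u v → v ∈ H

/-- A saturated set of vertices. -/
def Saturated (H : Set E.V) : Prop :=
  ∀ v, E.IsRegular v → (∀ e ∈ E.emits v, E.r e ∈ H) → v ∈ H

/-- The saturated closure of `W`: the smallest hereditary and saturated set containing `W`. -/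
def satClosure (W : Set E.V) : Set E.V :=
  ⋂₀ {H : Set E.V | E.Hereditary H ∧ E.Saturated H ∧ W ⊆ H}

/-- `es` is a finite walk (path) starting at `u`; `es = []` is the trivial path at `u`. -/
def IsWalkFrom (u : E.V) (es : List E.Ed) : Prop :=
  es.Chain' (fun e f => E.r e = E.s f) ∧ ∀ e ∈ es.head?, E.s e = u

/-- The terminal vertex (range) of the walk `es` starting at `u`. -/
def endVert (u : E.V) (es : List E.Ed) : E.V := es.getLast?.elim u E.r

/-- The set of vertices on the walk `es` starting at `u`. -/
def walkVerts (u : E.V) (es : List E.Ed) : Set E.V :=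
  insert u {v | ∃ e ∈ es, E.r e = v}

/-- An infinite path. -/
def IsInfPath (f : ℕ → E.Ed) : Prop := ∀ n, E.r (f n) = E.s (f (n + 1))

/-- The set of vertices on an infinite path. -/
def infVerts (f : ℕ → E.Ed) : Set E.V := Set.range fun n => E.s (f n)

/-- Elements of `E^{≤∞}`: finite walks or infinite paths. -/
inductive GPath (E : DGraph) : Type where
  | fin : E.V → List E.Ed → GPath E
  | inf : (ℕ → E.Ed) → GPath E

/-- Membership in `E^{≤∞}`: a well-formed finite path ending in a sink or an infinite
emitter, or an infinite path. -/
def gmem : GPath E → Prop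
  | .fin u es => E.IsWalkFrom u es ∧
      (E.IsSink (E.endVert u es) ∨ E.IsInfEmitter (E.endVert u es))
  | .inf f => E.IsInfPath f

/-- `p⁰`, the vertex set of an element of `E^{≤∞}`. -/
def gverts : GPath E → Set E.V
  | .fin u es => E.walkVerts u es
  | .inf f => E.infVerts f

/-- The graph `E` is cofinal. -/
def Cofinal : Prop :=
  ∀ v : E.V, ∀ p : GPath E, E.gmem p → ∃ w ∈ E.gverts p, E.Reaches v w

/-- `es` is a cycle based at `u`. -/
def IsCycle (u : E.V) (es : List E.Ed) : Prop :=
  es ≠ [] ∧ E.IsWalkFrom u es ∧ E.endVert u es = u ∧ (es.map E.s).Nodup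

/-- The cycle `es` (based at `u`) has an exit. -/
def HasExit (u : E.V) (es : List E.Ed) : Prop :=
  ∃ v ∈ E.walkVerts u es, ∃ e, E.s e = v ∧ e ∉ es

/-- An extreme cycle: a cycle with an exit such that `T(c⁰) ⊆ R(c⁰)`. -/
def IsExtremeCycle (u : E.V) (es : List E.Ed) : Prop :=
  E.IsCycle u es ∧ E.HasExit u es ∧
    E.tree (E.walkVerts u es) ⊆ E.root (E.walkVerts u es)

/-- `v` lies on some cycle. -/
def OnCycle (v : E.V) : Prop := ∃ u es, E.IsCycle u es ∧ v ∈ E.walkVerts u es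

/-- A terminal (infinite) path. -/
def IsTerminalPath (f : ℕ → E.Ed) : Prop :=
  E.IsInfPath f ∧
  (∀ v ∈ E.tree (E.infVerts f), ¬ E.IsInfEmitter v ∧ ¬ E.OnCycle v) ∧
  (∀ g : ℕ → E.Ed, E.IsInfPath g → E.s (g 0) ∈ E.infVerts f →
      E.tree (E.infVerts g) ⊆ E.root (E.infVerts g))

/-- A terminal vertex: a sink, a vertex on a cycle without exits, a vertex on an
extreme cycle, or a vertex on a terminal path. -/
def IsTerminalVert (v : E.V) : Prop :=
  E.IsSink v ∨
  (∃ u es, E.IsCycle u es ∧ ¬ E.HasExit u es ∧ v ∈ E.walkVerts u es) ∨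
  (∃ u es, E.IsExtremeCycle u es ∧ v ∈ E.walkVerts u es) ∨
  (∃ f, E.IsTerminalPath f ∧ v ∈ E.infVerts f)

/-- `p ∼ q` for elements of `E^{≤∞}`: `R(p⁰) = R(q⁰)`. -/
def pequiv (p q : GPath E) : Prop := E.root (E.gverts p) = E.root (E.gverts q)

/-- `v ≈ w` for terminal vertices. -/
def approx (v w : E.V) : Prop :=
  E.IsTerminalVert v ∧ E.IsTerminalVert w ∧
  ∃ p q : GPath E, E.gmem p ∧ E.gmem q ∧ v ∈ E.gverts p ∧ w ∈ E.gverts q ∧ E.pequiv p q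

/-- The cluster of a terminal vertex `v`: its `≈`-equivalence class. -/
def cluster (v : E.V) : Set E.V := {w | E.approx v w}

/-- `C` is a cluster of `E`. -/
def IsCluster (C : Set E.V) : Prop := ∃ v, E.IsTerminalVert v ∧ C = E.cluster v

/-- `Ter(E)`: the saturated closure of the set of terminal vertices. -/
def Ter : Set E.V := E.satClosure {v | E.IsTerminalVert v}

/-- The set `B_H` of breaking vertices of a (hereditary and saturated) set `H`. -/
def breaking (H : Set E.V) : Set E.V :=
  {v | v ∉ H ∧ E.IsInfEmitter v ∧
    {e | E.s e = v ∧ E.r e ∉ H}.Nonempty ∧ {e | E.s e = v ∧ E.r e ∉ H}.Finite}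

/-- `(H, S)` is an admissible pair. -/
def Admissible (H S : Set E.V) : Prop :=
  E.Hereditary H ∧ E.Saturated H ∧ S ⊆ E.breaking H

end DGraph

namespace DGraph

variable {E : DGraph}

lemma adj_step {f : ℕ → E.Ed} (hf : E.IsInfPath f) (n : ℕ) :
    E.Adj (E.s (f n)) (E.s (f (n + 1))) := ⟨f n, rfl, hf n⟩

lemma reaches_along {f : ℕ → E.Ed} (hf : E.IsInfPath f) {m n : ℕ} (h : m ≤ n) :
    E.Reaches (E.s (f m)) (E.s (f n)) := by
  induction h with
  | refl => exact Relation.ReflTransGen.refl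
  | step _ ih => exact ih.tail (adj_step hf _)

lemma self_mem_tree {W : Set E.V} {x : E.V} (hx : x ∈ W) : x ∈ E.tree W :=
  ⟨x, hx, Relation.ReflTransGen.refl⟩

lemma mem_tree_of {W : Set E.V} {x y : E.V} (hx : x ∈ E.tree W) (h : E.Reaches x y) :
    y ∈ E.tree W := by
  obtain ⟨w, hw, hr⟩ := hx; exact ⟨w, hw, hr.trans h⟩

lemma self_mem_root {W : Set E.V} {x : E.V} (hx : x ∈ W) : x ∈ E.root W :=
  ⟨x, hx, Relation.ReflTransGen.refl⟩

lemma mem_root_of {W : Set E.V} {x y : E.V} (hy : y ∈ E.root W) (h : E.Reaches x y) :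
    x ∈ E.root W := by
  obtain ⟨w, hw, hr⟩ := hy; exact ⟨w, hw, h.trans hr⟩

lemma root_subset_root {A B : Set E.V} (h : A ⊆ E.root B) : E.root A ⊆ E.root B := by
  rintro x ⟨a, ha, hr⟩; exact mem_root_of (h ha) hr

lemma root_eq_root {A B : Set E.V} (h1 : A ⊆ E.root B) (h2 : B ⊆ E.root A) :
    E.root A = E.root B :=
  subset_antisymm (root_subset_root h1) (root_subset_root h2)

lemma tree_subset_tree {A B : Set E.V} (h : A ⊆ E.tree B) : E.tree A ⊆ E.tree B := by
  rintro x ⟨a, ha, hr⟩; exact mem_tree_of (h ha) hr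

lemma tree_subset_root_self {f : ℕ → E.Ed} (hf : E.IsTerminalPath f) :
    E.tree (E.infVerts f) ⊆ E.root (E.infVerts f) :=
  hf.2.2 f hf.1 ⟨0, rfl⟩

lemma exists_emit {f : ℕ → E.Ed} (hf : E.IsTerminalPath f) {x : E.V}
    (hx : x ∈ E.tree (E.infVerts f)) : ∃ e, E.s e = x := by
  obtain ⟨w, ⟨n, hn⟩, hr⟩ := tree_subset_root_self hf hx
  rcases hr.cases_head with heq | ⟨c, ⟨e, he, _⟩, _⟩
  · exact ⟨f n, by rw [heq]; exact hn⟩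
  · exact ⟨e, he⟩

/-- Prepend one edge to an infinite path. -/
def consPath {E : DGraph} (e : E.Ed) (h : ℕ → E.Ed) : ℕ → E.Ed
  | 0 => e
  | n + 1 => h n

lemma consPath_inf {e : E.Ed} {h : ℕ → E.Ed} (hh : E.IsInfPath h)
    (he : E.r e = E.s (h 0)) : E.IsInfPath (consPath e h) := by
  intro n
  cases n with
  | zero => exact he
  | succ m => exact hh m

/-- Build an infinite path by successively choosing edges. -/
noncomputable def extChain {E : DGraph} (P : E.V → Prop)
    (hP : ∀ u, P u → ∃ e, E.s e = u ∧ P (E.r e)) (x : E.V) (hx : P x) :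
    ℕ → {u : E.V // P u}
  | 0 => ⟨x, hx⟩
  | n + 1 => ⟨E.r (hP _ (extChain P hP x hx n).2).choose,
      (hP _ (extChain P hP x hx n).2).choose_spec.2⟩

lemma exists_infPath_of (P : E.V → Prop)
    (hP : ∀ u, P u → ∃ e, E.s e = u ∧ P (E.r e)) (x : E.V) (hx : P x) :
    ∃ h : ℕ → E.Ed, E.IsInfPath h ∧ E.s (h 0) = x ∧ ∀ n, P (E.s (h n)) := by
  refine ⟨fun n => (hP _ (extChain P hP x hx n).2).choose, ?_, ?_, ?_⟩
  · intro n
    have h2 := (hP _ (extChain P hP x hx (n + 1)).2).choose_spec.1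
    rw [h2]
    rfl
  · exact (hP _ (extChain P hP x hx 0).2).choose_spec.1
  · intro n
    have h1 := (hP _ (extChain P hP x hx n).2).choose_spec.1
    rw [h1]
    exact (extChain P hP x hx n).2

lemma prepend {k : ℕ → E.Ed} (hk : E.IsInfPath k) {x : E.V}
    (hr : E.Reaches x (E.s (k 0))) :
    ∃ k' : ℕ → E.Ed, E.IsInfPath k' ∧ E.s (k' 0) = x ∧
      E.infVerts k ⊆ E.infVerts k' ∧
      ∀ w ∈ E.infVerts k', ∃ y ∈ E.infVerts k, E.Reaches w y := by
  induction hr using Relation.ReflTransGen.head_induction_on with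
  | refl => exact ⟨k, hk, rfl, subset_rfl, fun w hw => ⟨w, hw, Relation.ReflTransGen.refl⟩⟩
  | head hadj hrest ih =>
    obtain ⟨k', h1, h2, h3, h4⟩ := ih
    obtain ⟨e, hse, hre⟩ := hadj
    refine ⟨consPath e k', consPath_inf h1 (by rw [hre, h2]), hse, ?_, ?_⟩
    · intro z hz
      obtain ⟨n, hn⟩ := h3 hz
      exact ⟨n + 1, hn⟩
    · rintro w ⟨n, hn⟩
      cases n with
      | zero =>
        have hn' : E.s e = w := hn
        obtain ⟨y, hy, hry⟩ := h4 (E.s (k' 0)) ⟨0, rfl⟩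
        refine ⟨y, hy, ?_⟩
        rw [← hn']
        exact Relation.ReflTransGen.head ⟨e, rfl, rfl⟩ (by rw [hre, ← h2]; exact hry)
      | succ m => exact h4 w ⟨m, hn⟩

lemma extT2 {g k : ℕ → E.Ed} (hg : E.IsTerminalPath g) (hk : E.IsInfPath k)
    (h0 : E.s (k 0) ∈ E.tree (E.infVerts g)) :
    E.tree (E.infVerts k) ⊆ E.root (E.infVerts k) := by
  obtain ⟨x, hxg, hr⟩ := h0
  obtain ⟨k', hk'inf, hk'0, hsub, hback⟩ := prepend hk hr
  have hT2 := hg.2.2 k' hk'inf (by rw [hk'0]; exact hxg)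
  intro z hz
  have hz' : z ∈ E.tree (E.infVerts k') :=
    tree_subset_tree (fun a ha => self_mem_tree (hsub ha)) hz
  obtain ⟨w', hw', hrw⟩ := hT2 hz'
  obtain ⟨y, hy, hry⟩ := hback w' hw'
  exact mem_root_of (self_mem_root hy) (hrw.trans hry)

lemma exists_through {g : ℕ → E.Ed} (hg : E.IsTerminalPath g) {x w : E.V}
    (hx : x ∈ E.tree (E.infVerts g)) (hr : E.Reaches x w) :
    ∃ h : ℕ → E.Ed, E.IsInfPath h ∧ E.s (h 0) = x ∧ w ∈ E.infVerts h ∧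
      ∀ n, E.s (h n) ∈ E.tree (E.infVerts g) := by
  revert hx
  induction hr using Relation.ReflTransGen.head_induction_on with
  | refl =>
    intro hw
    obtain ⟨h, hinf, hs, hmem⟩ := exists_infPath_of (fun u => u ∈ E.tree (E.infVerts g))
      (fun u hu => by
        obtain ⟨e, he⟩ := exists_emit hg hu
        exact ⟨e, he, mem_tree_of hu (Relation.ReflTransGen.single ⟨e, he, rfl⟩)⟩) w hw
    exact ⟨h, hinf, hs, ⟨0, hs⟩, hmem⟩
  | head hadj hrest ih =>
    intro hx
    obtain ⟨e, hse, hre⟩ := hadj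
    have hc := mem_tree_of hx (Relation.ReflTransGen.single ⟨e, hse, hre⟩)
    obtain ⟨h, hinf, hs0, hwmem, hall⟩ := ih hc
    refine ⟨consPath e h, consPath_inf hinf (by rw [hre, hs0]), hse, ?_, ?_⟩
    · obtain ⟨n, hn⟩ := hwmem
      exact ⟨n + 1, hn⟩
    · intro n
      cases n with
      | zero => exact hse ▸ hx
      | succ m => exact hall m

lemma root_eq_of_mem {g k : ℕ → E.Ed} (hg : E.IsTerminalPath g) (hk : E.IsInfPath k)
    {x : E.V} (hxg : x ∈ E.infVerts g) (hxk : x ∈ E.infVerts k) :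
    E.root (E.infVerts k) = E.root (E.infVerts g) := by
  obtain ⟨N, hN⟩ := hxg
  obtain ⟨n, hn⟩ := hxk
  replace hN : E.s (g N) = x := hN
  replace hn : E.s (k n) = x := hn
  have hk'inf : E.IsInfPath (fun m => k (n + m)) := fun m => hk (n + m)
  have hT2 : E.tree (E.infVerts fun m => k (n + m)) ⊆
      E.root (E.infVerts fun m => k (n + m)) :=
    hg.2.2 _ hk'inf ⟨N, hN.trans hn.symm⟩
  apply root_eq_root
  · rintro z ⟨m, hm⟩
    replace hm : E.s (k m) = z := hm
    rcases le_total m n with hle | hle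
    · refine mem_root_of (self_mem_root ⟨N, hN⟩) ?_
      rw [← hm, ← hn]
      exact reaches_along hk hle
    · have : z ∈ E.tree (E.infVerts g) :=
        ⟨x, ⟨N, hN⟩, by rw [← hm, ← hn]; exact reaches_along hk hle⟩
      exact tree_subset_root_self hg this
  · rintro z ⟨M, hM⟩
    replace hM : E.s (g M) = z := hM
    rcases le_total M N with hle | hle
    · refine mem_root_of (self_mem_root ⟨n, hn⟩) ?_
      rw [← hM, ← hN]
      exact reaches_along hg.1 hle
    · have hzT : z ∈ E.tree (E.infVerts fun m => k (n + m)) :=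
        ⟨E.s (k n), ⟨0, rfl⟩, by rw [hn, ← hM, ← hN]; exact reaches_along hg.1 hle⟩
      refine root_subset_root ?_ (hT2 hzT)
      rintro a ⟨m, hm⟩
      exact self_mem_root ⟨n + m, hm⟩

lemma endVert_cons (u : E.V) (e : E.Ed) (es : List E.Ed) :
    E.endVert u (e :: es) = E.endVert (E.r e) es := by
  cases es with
  | nil => rfl
  | cons f fs =>
    show ((e :: f :: fs).getLast?).elim u E.r = ((f :: fs).getLast?).elim (E.r e) E.r
    rw [List.getLast?_cons_cons]
    cases h : (f :: fs).getLast? with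
    | none => simp at h
    | some a => rfl

lemma walk_cons {u : E.V} {e : E.Ed} {es : List E.Ed} (h : E.IsWalkFrom u (e :: es)) :
    E.s e = u ∧ E.IsWalkFrom (E.r e) es := by
  obtain ⟨hch, hh⟩ := h
  change List.IsChain _ (e :: es) at hch
  rw [List.isChain_cons] at hch
  exact ⟨hh e rfl, hch.2, fun f hf => (hch.1 f hf).symm⟩

lemma walk_reach_end {u : E.V} {es : List E.Ed} (h : E.IsWalkFrom u es) :
    ∀ w ∈ E.walkVerts u es, E.Reaches w (E.endVert u es) := by
  induction es generalizing u with
  | nil =>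
    intro w hw
    rcases hw with rfl | ⟨e, he, _⟩
    · exact Relation.ReflTransGen.refl
    · exact absurd he List.not_mem_nil
  | cons e es ih =>
    obtain ⟨hse, hwalk⟩ := walk_cons h
    intro w hw
    rw [endVert_cons]
    rcases hw with rfl | ⟨e', he', rfl⟩
    · exact Relation.ReflTransGen.head ⟨e, hse, rfl⟩
        (ih hwalk _ (Set.mem_insert _ _))
    · rcases List.mem_cons.mp he' with rfl | he'
      · exact ih hwalk _ (Set.mem_insert _ _)
      · exact ih hwalk _ (Set.mem_insert_iff.mpr (Or.inr ⟨e', he', rfl⟩))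

lemma termVert_of_path {g : ℕ → E.Ed} (hg : E.IsTerminalPath g) {x : E.V}
    (hx : x ∈ E.infVerts g) : E.IsTerminalVert x :=
  Or.inr (Or.inr (Or.inr ⟨g, hg, hx⟩))

lemma gpath_equiv {g : ℕ → E.Ed} (hg : E.IsTerminalPath g) {x : E.V}
    (hx : x ∈ E.infVerts g) (p : GPath E) (hp : E.gmem p) (hxp : x ∈ E.gverts p) :
    E.pequiv p (GPath.inf g) := by
  cases p with
  | fin u es =>
    exfalso
    obtain ⟨hwalk, hend⟩ := hp
    have hT : E.endVert u es ∈ E.tree (E.infVerts g) :=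
      mem_tree_of (self_mem_tree hx) (walk_reach_end hwalk x hxp)
    rcases hend with hsink | hinf
    · obtain ⟨e, he⟩ := exists_emit hg hT
      have : e ∈ E.emits (E.endVert u es) := he
      rw [hsink] at this
      exact this
    · exact (hg.2.1 _ hT).1 hinf
  | inf k => exact root_eq_of_mem hg hp hx hxp

lemma mem_satClosure {W : Set E.V} {x : E.V} :
    x ∈ E.satClosure W ↔ ∀ H, E.Hereditary H → E.Saturated H → W ⊆ H → x ∈ H := by
  constructor
  · intro h H h1 h2 h3
    exact Set.mem_sInter.mp h H ⟨h1, h2, h3⟩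
  · intro h
    exact Set.mem_sInter.mpr fun H hH => h H hH.1 hH.2.1 hH.2.2

lemma satClosure_hereditary (W : Set E.V) : E.Hereditary (E.satClosure W) :=
  fun u hu z hr => mem_satClosure.mpr fun H h1 h2 h3 =>
    h1 u (mem_satClosure.mp hu H h1 h2 h3) z hr

lemma satClosure_saturated (W : Set E.V) : E.Saturated (E.satClosure W) :=
  fun z hreg hall => mem_satClosure.mpr fun H h1 h2 h3 =>
    h2 z hreg fun e he => mem_satClosure.mp (hall e he) H h1 h2 h3

lemma subset_satClosure (W : Set E.V) : W ⊆ E.satClosure W :=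
  fun _ hx => mem_satClosure.mpr fun _ _ _ h3 => h3 hx

lemma satClosure_min {W H : Set E.V} (h1 : E.Hereditary H) (h2 : E.Saturated H)
    (h3 : W ⊆ H) : E.satClosure W ⊆ H :=
  fun _ hx => mem_satClosure.mp hx H h1 h2 h3

lemma satClosure_le {X Y : Set E.V} (h : X ⊆ E.satClosure Y) :
    E.satClosure X ⊆ E.satClosure Y :=
  satClosure_min (satClosure_hereditary Y) (satClosure_saturated Y) h

/-- Key saturation lemma: if a hereditary saturated set meets `T(g⁰)` for a terminal
path `g`, then it contains all of `T(g⁰)`. -/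
lemma tree_subset_of_satur {g : ℕ → E.Ed} (hg : E.IsTerminalPath g) {H : Set E.V}
    (hher : E.Hereditary H) (hsat : E.Saturated H) {u : E.V}
    (hu : u ∈ E.tree (E.infVerts g)) (huH : u ∈ H) :
    E.tree (E.infVerts g) ⊆ H := by
  obtain ⟨w, ⟨m, hm⟩, hr⟩ := tree_subset_root_self hg hu
  replace hm : E.s (g m) = w := hm
  have hmH : E.s (g m) ∈ H := hher u huH _ (by rw [hm]; exact hr)
  have htail : ∀ j, m ≤ j → E.s (g j) ∈ H :=
    fun j hj => hher _ hmH _ (reaches_along hg.1 hj)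
  intro y hy
  by_contra hyH
  have hP : ∀ z, (z ∈ E.tree (E.infVerts g) ∧ z ∉ H) →
      ∃ e, E.s e = z ∧ (E.r e ∈ E.tree (E.infVerts g) ∧ E.r e ∉ H) := by
    rintro z ⟨hz, hzH⟩
    have hreg : E.IsRegular z := by
      refine ⟨?_, ?_⟩
      · obtain ⟨e, he⟩ := exists_emit hg hz
        exact ⟨e, he⟩
      · exact Set.not_infinite.mp ((hg.2.1 z hz).1)
    by_contra hcon
    push_neg at hcon
    exact hzH (hsat z hreg fun e he =>
      hcon e he (mem_tree_of hz (Relation.ReflTransGen.single ⟨e, he, rfl⟩)))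
  obtain ⟨k, hkinf, hk0, hkP⟩ := exists_infPath_of _ hP y ⟨hy, hyH⟩
  have hT2 : E.tree (E.infVerts k) ⊆ E.root (E.infVerts k) :=
    extT2 hg hkinf (hkP 0).1
  obtain ⟨w', ⟨j, hj⟩, hrj⟩ := tree_subset_root_self hg hy
  replace hj : E.s (g j) = w' := hj
  have hJ : E.Reaches y (E.s (g (max j m))) := by
    refine Relation.ReflTransGen.trans ?_ (reaches_along hg.1 (le_max_left j m))
    rw [hj]; exact hrj
  have hmemT : E.s (g (max j m)) ∈ E.tree (E.infVerts k) :=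
    mem_tree_of (self_mem_tree ⟨0, hk0⟩) hJ
  obtain ⟨z, ⟨i, hi⟩, hrz⟩ := hT2 hmemT
  replace hi : E.s (k i) = z := hi
  refine (hkP i).2 (hher _ (htail _ (le_max_right j m)) _ ?_)
  rw [hi]; exact hrz

/-- The cluster of a vertex on a terminal path is the union of trees of equivalent
terminal paths. -/
lemma cluster_char {f : ℕ → E.Ed} (hf : E.IsTerminalPath f) {v : E.V}
    (hv : v ∈ E.infVerts f) :
    E.cluster v = {w | ∃ g : ℕ → E.Ed, E.IsTerminalPath g ∧
      E.root (E.infVerts g) = E.root (E.infVerts f) ∧ w ∈ E.tree (E.infVerts g)} := by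
  ext w
  constructor
  · rintro ⟨htv, htw, p, q, hp, hq, hvp, hwq, hpq⟩
    have hqroot : E.root (E.gverts q) = E.root (E.infVerts f) := by
      have h1 : E.root (E.gverts p) = E.root (E.infVerts f) := gpath_equiv hf hv p hp hvp
      have h2 : E.root (E.gverts p) = E.root (E.gverts q) := hpq
      rw [← h2]; exact h1
    have hwroot : w ∈ E.root (E.infVerts f) := hqroot ▸ self_mem_root hwq
    rcases htw with hsink | ⟨u, es, hcyc, hnoex, hwc⟩ | ⟨u, es, hext, hwc⟩ | ⟨g, hg, hwg⟩
    · exfalso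
      obtain ⟨z, ⟨j, hj⟩, hrz⟩ := hwroot
      replace hj : E.s (f j) = z := hj
      rcases hrz.cases_head with heq | ⟨c, ⟨e, he, _⟩, _⟩
      · have : f j ∈ E.emits w := by show E.s (f j) = w; rw [heq]; exact hj
        rw [hsink] at this; exact this
      · have : e ∈ E.emits w := he
        rw [hsink] at this; exact this
    · exfalso
      have hclosed : ∀ z', E.Reaches w z' → z' ∈ E.walkVerts u es := by
        intro z' hr
        induction hr with
        | refl => exact hwc
        | tail _ h2 ih =>
          obtain ⟨e, hse, hre⟩ := h2
          have hes : e ∈ es := by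
            by_contra hni
            exact hnoex ⟨_, ih, e, hse, hni⟩
          exact Set.mem_insert_iff.mpr (Or.inr ⟨e, hes, hre⟩)
      obtain ⟨z, ⟨j, hj⟩, hrz⟩ := hwroot
      exact (hf.2.1 z (self_mem_tree ⟨j, hj⟩)).2 ⟨u, es, hcyc, hclosed z hrz⟩
    · exfalso
      obtain ⟨hcyc, _, htree⟩ := hext
      obtain ⟨z, ⟨j, hj⟩, hrz⟩ := hwroot
      obtain ⟨y, hy, hry⟩ := htree ⟨w, hwc, hrz⟩
      exact (hf.2.1 y ⟨z, ⟨j, hj⟩, hry⟩).2 ⟨u, es, hcyc, hy⟩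
    · refine ⟨g, hg, ?_, self_mem_tree hwg⟩
      have h2 : E.root (E.gverts q) = E.root (E.infVerts g) := gpath_equiv hg hwg q hq hwq
      rw [← h2, hqroot]
  · rintro ⟨g, hg, hroot, hw⟩
    obtain ⟨x, hxg, hxr⟩ := hw
    obtain ⟨h, hhinf, hh0, hwh, hhT⟩ := exists_through hg (self_mem_tree hxg) hxr
    have hhterm : E.IsTerminalPath h := by
      refine ⟨hhinf, ?_, ?_⟩
      · intro z hz
        exact hg.2.1 z (tree_subset_tree (by rintro a ⟨n, hn⟩; exact hn ▸ hhT n) hz)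
      · intro k hkinf hk0
        refine extT2 hg hkinf ?_
        obtain ⟨n, hn⟩ := hk0
        exact hn ▸ hhT n
    have hrooth : E.root (E.infVerts h) = E.root (E.infVerts g) :=
      root_eq_of_mem hg hhinf hxg ⟨0, hh0⟩
    refine ⟨termVert_of_path hf hv, termVert_of_path hhterm hwh, GPath.inf f, GPath.inf h,
      hf.1, hhinf, hv, hwh, ?_⟩
    show E.root (E.infVerts f) = E.root (E.infVerts h)
    rw [hrooth, hroot]

end DGraph
/-- Lemma, terminal path case: if `v` lies on a terminal path `α`
with cluster `C`, then any `p ∈ E^{≤∞}` with `v ∈ p⁰` satisfies `p ∼ α`;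
`C = T(C)` and `C` is the union of the `T(β⁰)` over terminal paths `β ∼ α`;
and `satClosure C = satClosure α⁰ = satClosure {u}` for any `u ∈ C`. -/
theorem cluster_of_terminal_path (E : DGraph) (f : ℕ → E.Ed)
    (hf : E.IsTerminalPath f) (v : E.V) (hv : v ∈ E.infVerts f) :
    (∀ p : DGraph.GPath E, E.gmem p → v ∈ E.gverts p →
      E.pequiv p (DGraph.GPath.inf f)) ∧
    E.tree (E.cluster v) = E.cluster v ∧
    E.cluster v = {w | ∃ g : ℕ → E.Ed, E.IsTerminalPath g ∧
      E.root (E.infVerts g) = E.root (E.infVerts f) ∧ w ∈ E.tree (E.infVerts g)} ∧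
    E.satClosure (E.cluster v) = E.satClosure (E.infVerts f) ∧
    ∀ u ∈ E.cluster v, E.satClosure (E.cluster v) = E.satClosure {u} := by
  have hchar := DGraph.cluster_char hf hv
  refine ⟨fun p hp hvp => DGraph.gpath_equiv hf hv p hp hvp, ?_, hchar, ?_, ?_⟩
  · -- tree (cluster v) = cluster v
    apply subset_antisymm
    · rintro z ⟨w, hw, hr⟩
      rw [hchar] at hw ⊢
      obtain ⟨g, hg, hroot, hwT⟩ := hw
      exact ⟨g, hg, hroot, DGraph.mem_tree_of hwT hr⟩
    · exact fun w hw => DGraph.self_mem_tree hw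
  · -- satClosure (cluster v) = satClosure (infVerts f)
    have hsub2 : E.cluster v ⊆ E.satClosure (E.infVerts f) := by
      intro w hw
      rw [hchar] at hw
      obtain ⟨g, hg, hroot, hwT⟩ := hw
      have h0 : E.s (f 0) ∈ E.root (E.infVerts g) := by
        rw [hroot]; exact DGraph.self_mem_root ⟨0, rfl⟩
      obtain ⟨z, hzg, hrz⟩ := h0
      have hzH : z ∈ E.satClosure (E.infVerts f) :=
        DGraph.satClosure_hereditary (E.infVerts f) _
          (DGraph.subset_satClosure _ ⟨0, rfl⟩) z hrz
      exact DGraph.tree_subset_of_satur hg (DGraph.satClosure_hereditary _)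
        (DGraph.satClosure_saturated _) (DGraph.self_mem_tree hzg) hzH hwT
    have hsub1 : E.infVerts f ⊆ E.cluster v := by
      intro z hz
      exact ⟨DGraph.termVert_of_path hf hv, DGraph.termVert_of_path hf hz,
        DGraph.GPath.inf f, DGraph.GPath.inf f, hf.1, hf.1, hv, hz, rfl⟩
    exact subset_antisymm (DGraph.satClosure_le hsub2)
      (DGraph.satClosure_le (hsub1.trans (DGraph.subset_satClosure _)))
  · -- satClosure (cluster v) = satClosure {u}
    intro u hu
    apply subset_antisymm
    · apply DGraph.satClosure_le
      intro w hw
      have hu' := hu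
      rw [hchar] at hu' hw
      obtain ⟨gu, hgu, hru, huT⟩ := hu'
      obtain ⟨gw, hgw, hrw, hwT⟩ := hw
      have huH : u ∈ E.satClosure {u} := DGraph.subset_satClosure _ rfl
      have hTu : E.tree (E.infVerts gu) ⊆ E.satClosure {u} :=
        DGraph.tree_subset_of_satur hgu (DGraph.satClosure_hereditary _)
          (DGraph.satClosure_saturated _) huT huH
      have h0 : E.s (gu 0) ∈ E.root (E.infVerts gw) := by
        rw [hrw, ← hru]; exact DGraph.self_mem_root ⟨0, rfl⟩
      obtain ⟨z, hzg, hrz⟩ := h0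
      have hzH : z ∈ E.satClosure {u} :=
        DGraph.satClosure_hereditary {u} _ (hTu (DGraph.self_mem_tree ⟨0, rfl⟩)) z hrz
      exact DGraph.tree_subset_of_satur hgw (DGraph.satClosure_hereditary _)
        (DGraph.satClosure_saturated _) (DGraph.self_mem_tree hzg) hzH hwT
    · refine DGraph.satClosure_le ?_
      intro x hx
      rcases hx with rfl
      exact DGraph.subset_satClosure _ hu
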